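/- Let G be a simple graph and x, y non-adjacent vertices with N_G(x) ∩ N_G(y) = ∅, such that {x,y} is a genuine pair (no u,v outside {x,y} with G[{x,y,u,v}] ≅ 2K₂). Then the independence complex of G is contractible. -/

import Mathlib

/-- An abstract simplicial complex on the vertex type `V`. -/
structure SComplex (V : Type*) where
  faces : Set (Finset V)
  down_closed : ∀ ⦃s t : Finset V⦄, s ∈ faces → t ⊆ s → t ∈ faces

/-- The independence complex of a graph: faces are the (finite) independent sets. -/
def indComplex {V : Type*} (G : SimpleGraph V) : SComplex V where
  faces := {s : Finset V | ∀ a ∈ s, ∀ b ∈ s, ¬ G.Adj a b}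
  down_closed := fun s t hs hts a ha b hb => hs a (hts ha) b (hts hb)

/-- The geometric realization of an abstract simplicial complex, as a subspace of `V → ℝ`:
convex combinations of the vertices of a face. -/
def geomRealization {V : Type*} (K : SComplex V) : Set (V → ℝ) :=
  {f | (∀ v, 0 ≤ f v) ∧
    ∃ s ∈ K.faces, (∀ v, v ∉ s → f v = 0) ∧ ∑ v ∈ s, f v = 1}

/-- The induced subgraph of `G` on the four distinct vertices `a,b,c,d` is isomorphic to
`2K₂`, with matching edges `ab` and `cd`. -/
def IsInduced2K2On {V : Type*} (G : SimpleGraph V) (a b c d : V) : Prop :=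
  a ≠ b ∧ a ≠ c ∧ a ≠ d ∧ b ≠ c ∧ b ≠ d ∧ c ≠ d ∧
    G.Adj a b ∧ G.Adj c d ∧
    ¬ G.Adj a c ∧ ¬ G.Adj a d ∧ ¬ G.Adj b c ∧ ¬ G.Adj b d

/-- `{x,y}` is a genuine pair in `G`: non-adjacent distinct vertices such that no induced
`2K₂` of `G` uses both `x` and `y`. -/
def IsGenuinePair {V : Type*} (G : SimpleGraph V) (x y : V) : Prop :=
  x ≠ y ∧ ¬ G.Adj x y ∧
    ¬ ∃ u v : V, u ∉ ({x, y} : Set V) ∧ v ∉ ({x, y} : Set V) ∧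
      ∃ a b c d : V, ({a, b, c, d} : Set V) = {x, y, u, v} ∧ IsInduced2K2On G a b c d

open scoped Classical

noncomputable def Amass {V : Type*} (G : SimpleGraph V) (x : V) (f : V → ℝ) : ℝ :=
  ∑ᶠ v, (if G.Adj x v then f v else 0)

noncomputable def rmap {V : Type*} (G : SimpleGraph V) (x y : V) (f : V → ℝ) : V → ℝ :=
  fun v => (if G.Adj x v then 0 else f v) + (if v = y then Amass G x f else 0)

lemma Amass_eq {V : Type*} (G : SimpleGraph V) (x : V) {f : V → ℝ} {s : Finset V}
    (h0 : ∀ v ∉ s, f v = 0) :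
    Amass G x f = ∑ v ∈ s.filter (G.Adj x ·), f v := by
  rw [Finset.sum_filter, Amass]
  apply finsum_eq_sum_of_support_subset
  intro v hv
  simp only [Function.mem_support] at hv
  by_contra hvs
  rw [h0 v (by simpa using hvs)] at hv
  simp at hv

lemma sum_extend {V : Type*} {g : V → ℝ} {u w : Finset V} (huw : u ⊆ w)
    (h0 : ∀ v ∉ u, g v = 0) : ∑ v ∈ w, g v = ∑ v ∈ u, g v :=
  (Finset.sum_subset huw fun v _ hv => h0 v hv).symm

lemma sum_eq_of_vanish {V : Type*} {g : V → ℝ} {u w : Finset V}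
    (hu : ∀ v ∉ u, g v = 0) (hw : ∀ v ∉ w, g v = 0) :
    ∑ v ∈ u, g v = ∑ v ∈ w, g v := by
  rw [← sum_extend (Finset.subset_union_left (s₂ := w)) hu,
      ← sum_extend (Finset.subset_union_right (s₁ := u)) hw]

lemma Amass_bounds {V : Type*} (G : SimpleGraph V) (x : V) {f : V → ℝ}
    (hf : f ∈ geomRealization (indComplex G)) (s₀ : Finset V) :
    (∑ v ∈ s₀.filter (G.Adj x ·), f v) ≤ Amass G x f ∧
      Amass G x f ≤ (∑ v ∈ s₀.filter (G.Adj x ·), f v) + (1 - ∑ v ∈ s₀, f v) := by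
  obtain ⟨hpos, s, _, h0, hsum⟩ := hf
  have h0u : ∀ v ∉ s₀ ∪ s, f v = 0 := fun v hv => h0 v (fun hvs => hv (Finset.mem_union_right _ hvs))
  have hA : Amass G x f = ∑ v ∈ (s₀ ∪ s).filter (G.Adj x ·), f v := Amass_eq G x h0u
  have hsumu : ∑ v ∈ s₀ ∪ s, f v = 1 := by
    rw [sum_extend (Finset.subset_union_right (s₁ := s₀)) h0, hsum]
  constructor
  · rw [hA]
    exact Finset.sum_le_sum_of_subset_of_nonneg
      (Finset.filter_subset_filter _ Finset.subset_union_left) (fun v _ _ => hpos v)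
  · rw [hA]
    have hsub : (s₀ ∪ s).filter (G.Adj x ·) ⊆ s₀.filter (G.Adj x ·) ∪ ((s₀ ∪ s) \ s₀) := by
      intro v hv
      rw [Finset.mem_filter] at hv
      by_cases hvs : v ∈ s₀
      · exact Finset.mem_union_left _ (Finset.mem_filter.2 ⟨hvs, hv.2⟩)
      · exact Finset.mem_union_right _ (Finset.mem_sdiff.2 ⟨hv.1, hvs⟩)
    have hdisj : Disjoint (s₀.filter (G.Adj x ·)) ((s₀ ∪ s) \ s₀) := by
      refine Finset.disjoint_left.2 fun v hv1 hv2 => ?_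
      exact (Finset.mem_sdiff.1 hv2).2 (Finset.mem_of_mem_filter v hv1)
    calc ∑ v ∈ (s₀ ∪ s).filter (G.Adj x ·), f v
        ≤ ∑ v ∈ s₀.filter (G.Adj x ·) ∪ ((s₀ ∪ s) \ s₀), f v :=
          Finset.sum_le_sum_of_subset_of_nonneg hsub (fun v _ _ => hpos v)
      _ = (∑ v ∈ s₀.filter (G.Adj x ·), f v) + ∑ v ∈ (s₀ ∪ s) \ s₀, f v :=
          Finset.sum_union hdisj
      _ = (∑ v ∈ s₀.filter (G.Adj x ·), f v) + (1 - ∑ v ∈ s₀, f v) := by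
          have := Finset.sum_sdiff_eq_sub (f := f) (Finset.subset_union_left (s₁ := s₀) (s₂ := s))
          rw [this, hsumu]

lemma continuous_Amass {V : Type*} (G : SimpleGraph V) (x : V) :
    Continuous (fun p : geomRealization (indComplex G) => Amass G x (p : V → ℝ)) := by
  rw [continuous_iff_continuousAt]
  intro p₀
  obtain ⟨hpos₀, s₀, _, h0₀, hsum₀⟩ := p₀.2
  have hev : ∀ v : V, Continuous (fun p : geomRealization (indComplex G) => (p : V → ℝ) v) :=
    fun v => (continuous_apply v).comp continuous_subtype_val
  have hg : Continuous (fun p : geomRealization (indComplex G) =>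
      ∑ v ∈ s₀.filter (G.Adj x ·), (p : V → ℝ) v) :=
    continuous_finset_sum _ (fun v _ => hev v)
  have hh : Continuous (fun p : geomRealization (indComplex G) =>
      (∑ v ∈ s₀.filter (G.Adj x ·), (p : V → ℝ) v) + (1 - ∑ v ∈ s₀, (p : V → ℝ) v)) :=
    hg.add (continuous_const.sub (continuous_finset_sum _ (fun v _ => hev v)))
  have hApt : Amass G x (p₀ : V → ℝ) = ∑ v ∈ s₀.filter (G.Adj x ·), (p₀ : V → ℝ) v :=
    Amass_eq G x h0₀
  have hgt : Filter.Tendsto (fun p : geomRealization (indComplex G) =>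
      ∑ v ∈ s₀.filter (G.Adj x ·), (p : V → ℝ) v) (nhds p₀) (nhds (Amass G x (p₀ : V → ℝ))) := by
    rw [hApt]; exact hg.continuousAt
  have hht : Filter.Tendsto (fun p : geomRealization (indComplex G) =>
      (∑ v ∈ s₀.filter (G.Adj x ·), (p : V → ℝ) v) + (1 - ∑ v ∈ s₀, (p : V → ℝ) v))
      (nhds p₀) (nhds (Amass G x (p₀ : V → ℝ))) := by
    have : Amass G x (p₀ : V → ℝ) =
        (∑ v ∈ s₀.filter (G.Adj x ·), (p₀ : V → ℝ) v) + (1 - ∑ v ∈ s₀, (p₀ : V → ℝ) v) := by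
      rw [hApt, hsum₀]; ring
    rw [this]; exact hh.continuousAt
  exact tendsto_of_tendsto_of_tendsto_of_le_of_le hgt hht
    (fun p => (Amass_bounds G x p.2 s₀).1) (fun p => (Amass_bounds G x p.2 s₀).2)

noncomputable def Hmap {V : Type*} (G : SimpleGraph V) (x y : V) (f : V → ℝ) (a b : ℝ) :
    V → ℝ :=
  fun v => (1 - b) * ((1 - a) * f v + a * rmap G x y f v) + b * (if v = x then 1 else 0)

lemma key_no_both {V : Type*} {G : SimpleGraph V} {x y : V}
    (h : IsGenuinePair G x y) (hN : G.neighborSet x ∩ G.neighborSet y = ∅)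
    {u w : V} (huw : ¬ G.Adj u w) (hxu : G.Adj x u) (hyw : G.Adj y w) : False := by
  obtain ⟨hxy, hnadj, h2k2⟩ := h
  have hdisj : ∀ z : V, G.Adj x z → G.Adj y z → False := by
    intro z h1 h2
    have : z ∈ G.neighborSet x ∩ G.neighborSet y := ⟨h1, h2⟩
    rw [hN] at this
    exact this
  have hux : u ≠ x := fun e => G.irrefl (e ▸ hxu)
  have huy : u ≠ y := fun e => hnadj (e ▸ hxu)
  have hwx : w ≠ x := fun e => hnadj (G.adj_symm (e ▸ hyw))
  have hwy : w ≠ y := fun e => G.irrefl (e ▸ hyw)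
  have huw' : u ≠ w := fun e => hdisj u hxu (e ▸ hyw)
  have hxw : ¬ G.Adj x w := fun hh => hdisj w hh hyw
  have huyadj : ¬ G.Adj u y := fun hh => hdisj u hxu (G.adj_symm hh)
  apply h2k2
  refine ⟨u, w, by simp [hux, huy], by simp [hwx, hwy], x, u, y, w, ?_, ?_⟩
  · ext z
    simp only [Set.mem_insert_iff, Set.mem_singleton_iff]
    tauto
  · exact ⟨hux.symm, hxy, Ne.symm hwx, huy, huw', Ne.symm hwy,
      hxu, hyw, hnadj, hxw, huyadj, huw⟩

lemma Hmap_mem {V : Type*} {G : SimpleGraph V} {x y : V}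
    (h : IsGenuinePair G x y) (hN : G.neighborSet x ∩ G.neighborSet y = ∅)
    {f : V → ℝ} (hf : f ∈ geomRealization (indComplex G))
    {a b : ℝ} (ha0 : 0 ≤ a) (ha1 : a ≤ 1) (hb0 : 0 ≤ b) (hb1 : b ≤ 1)
    (hab : b = 0 ∨ a = 1) :
    Hmap G x y f a b ∈ geomRealization (indComplex G) := by
  obtain ⟨hpos, s, hsface, h0, hsum⟩ := hf
  classical
  set s' : Finset V := s.filter (fun v => f v ≠ 0) with hs'def
  have hsub' : s' ⊆ s := Finset.filter_subset _ _
  have h0' : ∀ v ∉ s', f v = 0 := by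
    intro v hv
    by_cases hvs : v ∈ s
    · by_contra hne
      exact hv (Finset.mem_filter.2 ⟨hvs, hne⟩)
    · exact h0 v hvs
  have hs'face : s' ∈ (indComplex G).faces := (indComplex G).down_closed hsface hsub'
  have hindep : ∀ p ∈ s', ∀ q ∈ s', ¬ G.Adj p q := hs'face
  have hsum' : ∑ v ∈ s', f v = 1 := by
    rw [← hsum]; exact (sum_extend hsub' h0').symm
  have hA : Amass G x f = ∑ v ∈ s'.filter (G.Adj x ·), f v := Amass_eq G x h0'
  have hA0 : 0 ≤ Amass G x f := by
    rw [hA]; exact Finset.sum_nonneg fun v _ => hpos v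
  have hrpos : ∀ v, 0 ≤ rmap G x y f v := by
    intro v
    unfold rmap
    apply add_nonneg <;> split <;> simp [hpos, hA0, le_refl]
  have hxy : x ≠ y := h.1
  have hnadj : ¬ G.Adj x y := h.2.1
  -- general positivity of the point
  have hptpos : ∀ v, 0 ≤ Hmap G x y f a b v := by
    intro v
    unfold Hmap
    apply add_nonneg
    · apply mul_nonneg (by linarith)
      apply add_nonneg (mul_nonneg (by linarith) (hpos v)) (mul_nonneg ha0 (hrpos v))
    · apply mul_nonneg hb0; split <;> norm_num
  by_cases hAz : Amass G x f = 0
  · -- case A : no mass on N(x); r f = f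
    have hfz : ∀ v, G.Adj x v → f v = 0 := by
      intro v hadj
      by_contra hne
      have hv' : v ∈ s'.filter (G.Adj x ·) := Finset.mem_filter.2 ⟨Finset.mem_filter.2
        ⟨by_contra fun hs => hne (h0 v hs), hne⟩, hadj⟩
      have := (Finset.sum_eq_zero_iff_of_nonneg (fun w _ => hpos w)).1 (hA ▸ hAz) v hv'
      exact hne this
    have hr : rmap G x y f = f := by
      funext v
      unfold rmap
      rw [hAz]
      split
      · next hadj => simp [hfz v hadj]
      · simp
    have hxs' : ∀ v ∈ s', ¬ G.Adj x v := fun v hv hadj =>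
      (Finset.mem_filter.1 hv).2 (hfz v hadj)
    refine ⟨hptpos, insert x s', ?_, ?_, ?_⟩
    · intro p hp q hq
      rcases Finset.mem_insert.1 hp with rfl | hp' <;>
        rcases Finset.mem_insert.1 hq with rfl | hq'
      · exact G.irrefl
      · exact hxs' q hq'
      · exact fun hadj => hxs' p hp' (G.adj_symm hadj)
      · exact hindep p hp' q hq'
    · intro v hv
      have hvx : v ≠ x := fun e => hv (e ▸ Finset.mem_insert_self x s')
      have hvs : v ∉ s' := fun e => hv (Finset.mem_insert_of_mem e)
      unfold Hmap
      rw [hr, h0' v hvs, if_neg hvx]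
      ring
    · have hfs : ∑ v ∈ insert x s', f v = 1 := by
        rw [sum_extend (Finset.subset_insert x s') h0', hsum']
      have hds : ∑ v ∈ insert x s', (if v = x then (1:ℝ) else 0) = 1 := by
        rw [Finset.sum_ite_eq' (insert x s') x (fun _ => (1:ℝ))]
        simp
      unfold Hmap
      rw [Finset.sum_add_distrib, ← Finset.mul_sum, ← Finset.mul_sum, hr]
      rw [Finset.sum_add_distrib, ← Finset.mul_sum, ← Finset.mul_sum, hfs, hds]
      ring
  · -- case B : positive mass on N(x)
    have hApos : 0 < Amass G x f := lt_of_le_of_ne hA0 (Ne.symm hAz)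
    obtain ⟨u₀, hu₀, _⟩ := Finset.exists_ne_zero_of_sum_ne_zero (hA ▸ hAz)
    obtain ⟨hu₀s, hxu₀⟩ := Finset.mem_filter.1 hu₀
    have hys : ∀ w ∈ s', ¬ G.Adj y w := fun w hw hadj =>
      key_no_both h hN (hindep u₀ hu₀s w hw) hxu₀ hadj
    have hfsum : ∑ v ∈ insert y s', f v = 1 := by
      rw [sum_extend (Finset.subset_insert y s') h0', hsum']
    have hrsum : ∑ v ∈ insert y s', rmap G x y f v = 1 := by
      unfold rmap
      rw [Finset.sum_add_distrib]
      have h1 : ∑ v ∈ insert y s', (if G.Adj x v then (0:ℝ) else f v)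
          = (∑ v ∈ insert y s', f v) - ∑ v ∈ insert y s', (if G.Adj x v then f v else 0) := by
        rw [← Finset.sum_sub_distrib]
        apply Finset.sum_congr rfl
        intro v _
        split <;> ring
      have h2 : ∑ v ∈ insert y s', (if G.Adj x v then f v else 0)
          = Amass G x f := by
        rw [← Finset.sum_filter, Finset.filter_insert, if_neg hnadj, ← hA]
      have h3 : ∑ v ∈ insert y s', (if v = y then Amass G x f else 0) = Amass G x f := by
        rw [Finset.sum_ite_eq' (insert y s') y (fun _ => Amass G x f)]
        simp
      rw [h1, h2, h3, hfsum]
      ring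
    have hrvan : ∀ v ∉ insert y s', rmap G x y f v = 0 := by
      intro v hv
      have hvy : v ≠ y := fun e => hv (e ▸ Finset.mem_insert_self y s')
      have hvs : v ∉ s' := fun e => hv (Finset.mem_insert_of_mem e)
      unfold rmap
      rw [if_neg hvy, h0' v hvs]
      split <;> ring
    rcases hab with rfl | rfl
    · -- b = 0 : segment from f to r f, face s' ∪ {y}
      refine ⟨hptpos, insert y s', ?_, ?_, ?_⟩
      · intro p hp q hq
        rcases Finset.mem_insert.1 hp with rfl | hp' <;>
          rcases Finset.mem_insert.1 hq with rfl | hq'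
        · exact G.irrefl
        · exact hys q hq'
        · exact fun hadj => hys p hp' (G.adj_symm hadj)
        · exact hindep p hp' q hq'
      · intro v hv
        have hvs : v ∉ s' := fun e => hv (Finset.mem_insert_of_mem e)
        unfold Hmap
        rw [hrvan v hv, h0' v hvs]
        ring
      · unfold Hmap
        rw [Finset.sum_add_distrib, ← Finset.mul_sum, ← Finset.mul_sum,
          Finset.sum_add_distrib, ← Finset.mul_sum, ← Finset.mul_sum, hfsum, hrsum]
        have hds : ∑ v ∈ insert y s', (if v = x then (1:ℝ) else 0)
            = if x ∈ insert y s' then 1 else 0 :=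
          Finset.sum_ite_eq' (insert y s') x (fun _ => (1:ℝ))
        rw [hds]
        split <;> ring
    · -- a = 1 : segment from r f to δₓ, face (s' \ N(x)) ∪ {x, y}
      set U : Finset V := insert x (insert y (s'.filter (fun v => ¬ G.Adj x v))) with hUdef
      have hUvan : ∀ v ∉ U, rmap G x y f v = 0 := by
        intro v hv
        have hvx : v ≠ x := fun e => hv (e ▸ Finset.mem_insert_self x _)
        have hvy : v ≠ y := fun e => hv (by
          rw [hUdef, e]; exact Finset.mem_insert_of_mem (Finset.mem_insert_self y _))
        unfold rmap
        rw [if_neg hvy]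
        split
        · ring
        · next hnx =>
          have hvs : v ∉ s' := fun hs => hv (by
            rw [hUdef]
            exact Finset.mem_insert_of_mem (Finset.mem_insert_of_mem
              (Finset.mem_filter.2 ⟨hs, hnx⟩)))
          rw [h0' v hvs]; ring
      refine ⟨hptpos, U, ?_, ?_, ?_⟩
      · intro p hp q hq
        rw [hUdef] at hp hq
        simp only [Finset.mem_insert, Finset.mem_filter] at hp hq
        rcases hp with rfl | rfl | ⟨hps, hpx⟩ <;> rcases hq with rfl | rfl | ⟨hqs, hqx⟩
        · exact G.irrefl
        · exact hnadj
        · exact fun hadj => hqx hadj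
        · exact fun hadj => hnadj (G.adj_symm hadj)
        · exact G.irrefl
        · exact hys q hqs
        · exact fun hadj => hpx (G.adj_symm hadj)
        · exact fun hadj => hys p hps (G.adj_symm hadj)
        · exact hindep p hps q hqs
      · intro v hv
        have hvx : v ≠ x := fun e => hv (e ▸ Finset.mem_insert_self x _)
        unfold Hmap
        rw [hUvan v hv, if_neg hvx]
        ring
      · unfold Hmap
        rw [Finset.sum_add_distrib, ← Finset.mul_sum, ← Finset.mul_sum,
          Finset.sum_add_distrib, ← Finset.mul_sum, ← Finset.mul_sum]
        have hUr : ∑ v ∈ U, rmap G x y f v = 1 := by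
          rw [sum_eq_of_vanish hUvan hrvan, hrsum]
        have hds : ∑ v ∈ U, (if v = x then (1:ℝ) else 0) = 1 := by
          rw [Finset.sum_ite_eq' U x (fun _ => (1:ℝ)), if_pos (Finset.mem_insert_self x _)]
        rw [hUr, hds]
        ring

/-- If `{x,y}` is a genuine pair of `G` with `N_G(x) ∩ N_G(y) = ∅`, then the independence
complex of `G` is contractible. -/
theorem stmt_9 {V : Type*} (G : SimpleGraph V) (x y : V)
    (h : IsGenuinePair G x y) (hN : G.neighborSet x ∩ G.neighborSet y = ∅) :
    ContractibleSpace (geomRealization (indComplex G)) := by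
  classical
  rw [contractible_iff_id_nullhomotopic]
  have hδ : (fun v => if v = x then (1:ℝ) else 0) ∈ geomRealization (indComplex G) := by
    refine ⟨fun v => by dsimp only; split <;> norm_num, {x}, ?_, ?_, ?_⟩
    · intro a ha b hb
      rw [Finset.mem_singleton] at ha hb
      subst ha; subst hb; exact G.irrefl
    · intro v hv
      dsimp only
      rw [if_neg (by simpa using hv)]
    · simp
  refine ⟨⟨_, hδ⟩, ?_⟩
  constructor
  have hmem : ∀ q : unitInterval × geomRealization (indComplex G),
      Hmap G x y (q.2 : V → ℝ) (min (2*(q.1:ℝ)) 1) (max (2*(q.1:ℝ)-1) 0)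
        ∈ geomRealization (indComplex G) := by
    intro q
    have ht0 : (0:ℝ) ≤ (q.1:ℝ) := q.1.2.1
    have ht1 : (q.1:ℝ) ≤ 1 := q.1.2.2
    refine Hmap_mem h hN q.2.2 (le_min (by linarith) zero_le_one) (min_le_right _ _)
      (le_max_right _ _) (max_le (by linarith) zero_le_one) ?_
    by_cases hle : 2*(q.1:ℝ) ≤ 1
    · exact Or.inl (max_eq_right (by linarith))
    · exact Or.inr (min_eq_right (by linarith))
  refine ⟨⟨fun q => ⟨Hmap G x y (q.2 : V → ℝ) (min (2*(q.1:ℝ)) 1) (max (2*(q.1:ℝ)-1) 0),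
      hmem q⟩, ?_⟩, ?_, ?_⟩
  · apply Continuous.subtype_mk
    apply continuous_pi
    intro v
    have ht : Continuous fun q : unitInterval × geomRealization (indComplex G) => (q.1:ℝ) :=
      continuous_subtype_val.comp continuous_fst
    have hA : Continuous fun q : unitInterval × geomRealization (indComplex G) =>
        min (2*(q.1:ℝ)) 1 := (continuous_const.mul ht).min continuous_const
    have hB : Continuous fun q : unitInterval × geomRealization (indComplex G) =>
        max (2*(q.1:ℝ)-1) 0 := ((continuous_const.mul ht).sub continuous_const).max
          continuous_const
    have hev : ∀ w : V, Continuous fun q : unitInterval × geomRealization (indComplex G) =>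
        (q.2 : V → ℝ) w := fun w =>
      (continuous_apply w).comp (continuous_subtype_val.comp continuous_snd)
    have hAm : Continuous fun q : unitInterval × geomRealization (indComplex G) =>
        Amass G x (q.2 : V → ℝ) := (continuous_Amass G x).comp continuous_snd
    have hr : Continuous fun q : unitInterval × geomRealization (indComplex G) =>
        rmap G x y (q.2 : V → ℝ) v := by
      unfold rmap
      apply Continuous.add
      · by_cases hc : G.Adj x v
        · simp only [if_pos hc]; exact continuous_const
        · simp only [if_neg hc]; exact hev v
      · by_cases hc : v = y
        · simp only [if_pos hc]; exact hAm
        · simp only [if_neg hc]; exact continuous_const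
    unfold Hmap
    exact ((continuous_const.sub hB).mul
        (((continuous_const.sub hA).mul (hev v)).add (hA.mul hr))).add
      (hB.mul continuous_const)
  · intro p
    apply Subtype.ext
    funext v
    show Hmap G x y (p : V → ℝ) (min (2*((0:unitInterval):ℝ)) 1)
        (max (2*((0:unitInterval):ℝ)-1) 0) v = (p : V → ℝ) v
    rw [show ((0:unitInterval):ℝ) = 0 from rfl]
    norm_num [Hmap]
  · intro p
    apply Subtype.ext
    funext v
    show Hmap G x y (p : V → ℝ) (min (2*((1:unitInterval):ℝ)) 1)
        (max (2*((1:unitInterval):ℝ)-1) 0) v = _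
    rw [show ((1:unitInterval):ℝ) = 1 from rfl]
    norm_num [Hmap]
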